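/- Suppose that f is a polynomial with f(0) = 1. Then |f(z)| ≤ exp(s̃_1(f)·|z|) for all z ∈ ℂ; and for every integer p ≥ 2 there exists a positive constant c_p (independent of f) such that |f(z)| ≤ exp(−Re Σ_{k=1}^{p−1} (1/k)·s_k(f)·z^k + c_p·s̃_p(f)·|z|^p) for all z ∈ ℂ. -/

import Mathlib

noncomputable section
open Filter Polynomial Topology

/-- `f_n → a` weakly: for every `k`, `f_n^{(k)}(0) → k! * a_k`. -/
def WeakConv (f : ℕ → Polynomial ℂ) (a : ℕ → ℂ) : Prop :=
  ∀ k : ℕ, Tendsto (fun n => (Polynomial.derivative^[k] (f n)).eval 0) atTop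
    (𝓝 ((Nat.factorial k : ℂ) * a k))

def WeakConvR (f : ℕ → Polynomial ℝ) (a : ℕ → ℝ) : Prop :=
  ∀ k : ℕ, Tendsto (fun n => (Polynomial.derivative^[k] (f n)).eval 0) atTop
    (𝓝 ((Nat.factorial k : ℝ) * a k))

/-- The nonnegative real axis `[0,∞)` as a subset of `ℂ`. -/
def S0 : Set ℂ := {z : ℂ | z.im = 0 ∧ 0 ≤ z.re}

/-- The Pólya–Obrechkoff class. -/
def PolyaObrechkoff (F : ℂ → ℂ) : Prop :=
  ∃ (ι : Type) (_ : Countable ι) (c : ℂ) (m : ℕ) (α : ℝ) (β : ℂ) (a : ι → ℂ),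
    0 ≤ α ∧
    (∀ j, a j ≠ 0 ∧ 0 ≤ (a j).im) ∧
    Summable (fun j => ((‖a j‖)⁻¹) ^ 2) ∧
    Summable (fun j => (-(a j)⁻¹).im) ∧
    (∑' j, (-(a j)⁻¹).im) ≤ β.im ∧
    ∀ z : ℂ, F z = c * z ^ m * Complex.exp (-(α : ℂ) * z ^ 2 + β * z) *
      ∏' j, ((1 - z / a j) * Complex.exp (z / a j))

/-- The Laguerre–Pólya class. -/
def LaguerrePolya (F : ℂ → ℂ) : Prop :=
  ∃ (ι : Type) (_ : Countable ι) (c : ℝ) (m : ℕ) (α : ℝ) (β : ℝ) (a : ι → ℝ),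
    0 ≤ α ∧
    (∀ j, a j ≠ 0) ∧
    Summable (fun j => ((a j)⁻¹) ^ 2) ∧
    ∀ z : ℂ, F z = (c : ℂ) * z ^ m * Complex.exp (-(α : ℂ) * z ^ 2 + (β : ℂ) * z) *
      ∏' j, ((1 - z / (a j : ℂ)) * Complex.exp (z / (a j : ℂ)))

/-- The class `LP*`: products of a real polynomial with a Laguerre–Pólya function. -/
def LPStar (F : ℂ → ℂ) : Prop :=
  ∃ (P : Polynomial ℝ) (g : ℂ → ℂ), LaguerrePolya g ∧
    ∀ z : ℂ, F z = (P.map (algebraMap ℝ ℂ)).eval z * g z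

/-- The class `LP(S₀)`. -/
def LPS0 (F : ℂ → ℂ) : Prop :=
  ∃ (ι : Type) (_ : Countable ι) (c : ℝ) (m : ℕ) (α : ℝ) (a : ι → ℝ),
    0 ≤ α ∧
    (∀ j, 0 < a j) ∧
    Summable (fun j => (a j)⁻¹) ∧
    ∀ z : ℂ, F z = (c : ℂ) * z ^ m * Complex.exp (-(α : ℂ) * z) *
      ∏' j, (1 - z / (a j : ℂ))

/-- The class `LP(S₀)*`. -/
def LPS0Star (F : ℂ → ℂ) : Prop :=
  ∃ (P : Polynomial ℝ) (g : ℂ → ℂ), LPS0 g ∧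
    ∀ z : ℂ, F z = (P.map (algebraMap ℝ ℂ)).eval z * g z

/-- `s_k(f) = Σ_j a_j^{-k}`, sum over the roots of `f` with multiplicity. -/
def sPow (k : ℕ) (f : Polynomial ℂ) : ℂ := (f.roots.map (fun a => (a⁻¹) ^ k)).sum

/-- `s̃_k(f) = Σ_j |a_j|^{-k}`, sum over the roots of `f` with multiplicity. -/
def sAbs (k : ℕ) (f : Polynomial ℂ) : ℝ :=
  (f.roots.map (fun a => ((‖a‖)⁻¹) ^ k)).sum

open scoped Classical in
/-- `N(f;X)`: number of zeros of the polynomial `f` in `X`, with multiplicity. -/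
def NPoly (g : Polynomial ℂ) (X : Set ℂ) : ℕ :=
  Multiset.card (g.roots.filter (fun z => z ∈ X))

/-- `N(f;X)` for a real polynomial, zeros counted in `ℂ`. -/
def NPolyR (g : Polynomial ℝ) (X : Set ℂ) : ℕ := NPoly (g.map (algebraMap ℝ ℂ)) X

/-- The `n`-th Jensen polynomial of the series `Σ a_k z^k`. -/
def jensen (a : ℕ → ℂ) (n : ℕ) : Polynomial ℂ :=
  ∑ k ∈ Finset.range (n + 1),
    Polynomial.C ((n.factorial : ℂ) / ((n - k).factorial : ℂ) * a k) * Polynomial.X ^ k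

def jensenR (a : ℕ → ℝ) (n : ℕ) : Polynomial ℝ :=
  ∑ k ∈ Finset.range (n + 1),
    Polynomial.C ((n.factorial : ℝ) / ((n - k).factorial : ℝ) * a k) * Polynomial.X ^ k

/-- The `n`-th Appell polynomial of the series `Σ a_k z^k`. -/
def appellR (a : ℕ → ℝ) (n : ℕ) : Polynomial ℝ :=
  ∑ k ∈ Finset.range (n + 1),
    Polynomial.C ((n.factorial : ℝ) / ((n - k).factorial : ℝ) * a k) * Polynomial.X ^ (n - k)

/-- Order of vanishing of `F` at `z` (least `m` with `F^{(m)}(z) ≠ 0`; `0` if none). -/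
def zeroOrder (F : ℂ → ℂ) (z : ℂ) : ℕ := sInf {m : ℕ | iteratedDeriv m F z ≠ 0}

/-- `N(F;X)` for an entire function: zeros in `X` counted with multiplicity. -/
def NEnt (F : ℂ → ℂ) (X : Set ℂ) : ℕ∞ := ∑' z : X, (zeroOrder F z : ℕ∞)

section Aux4

private lemma abs_prod_le_exp_sum (F : ℂ → ℂ) (G : ℂ → ℝ) (s : Multiset ℂ) :
    (∀ a ∈ s, ‖F a‖ ≤ Real.exp (G a)) →
    ‖(s.map F).prod‖ ≤ Real.exp ((s.map G).sum) := by
  induction s using Multiset.induction_on with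
  | empty => intro _; simp
  | cons a s ih =>
    intro h
    simp only [Multiset.map_cons, Multiset.prod_cons, Multiset.sum_cons, norm_mul, Real.exp_add]
    exact mul_le_mul (h a (Multiset.mem_cons_self a s))
      (ih fun b hb => h b (Multiset.mem_cons_of_mem hb))
      (norm_nonneg _) (Real.exp_nonneg _)

private lemma multiset_sum_swap (I : Finset ℕ) (g : ℕ → ℂ → ℂ) (s : Multiset ℂ) :
    (s.map (fun a => ∑ k ∈ I, g k a)).sum = ∑ k ∈ I, (s.map (g k)).sum := by
  induction s using Multiset.induction_on with
  | empty => simp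
  | cons a s ih => simp [ih, Finset.sum_add_distrib]

private lemma re_multiset_sum (s : Multiset ℂ) (F : ℂ → ℂ) :
    ((s.map F).sum).re = (s.map fun a => (F a).re).sum := by
  induction s using Multiset.induction_on with
  | empty => simp
  | cons a s ih => simp [ih]

private lemma eval_eq_prod' {f : Polynomial ℂ} (hf : f.eval 0 = 1) :
    (∀ a ∈ f.roots, a ≠ 0) ∧
      ∀ z : ℂ, f.eval z = (f.roots.map (fun a => 1 - z / a)).prod := by
  have hroots : ∀ a ∈ f.roots, a ≠ 0 := by
    rintro a ha rfl
    have := Polynomial.isRoot_of_mem_roots ha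
    rw [Polynomial.IsRoot] at this
    rw [this] at hf; exact one_ne_zero hf.symm
  refine ⟨hroots, fun z => ?_⟩
  have hsp : f.Splits := IsAlgClosed.splits f
  have heq := hsp.eq_prod_roots
  have hev : ∀ w : ℂ, f.eval w = f.leadingCoeff * (f.roots.map (fun a => w - a)).prod := by
    intro w
    conv_lhs => rw [heq]
    rw [Polynomial.eval_mul, Polynomial.eval_C, Polynomial.eval_multiset_prod, Multiset.map_map]
    simp [Function.comp]
  have h0 := hev 0
  rw [hf] at h0
  set Q : ℂ := (f.roots.map (fun a => (0:ℂ) - a)).prod with hQ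
  have hQne : Q ≠ 0 := by
    intro h
    rw [h, mul_zero] at h0
    exact one_ne_zero h0
  have hL : f.leadingCoeff = 1 / Q := (eq_div_iff hQne).mpr h0.symm
  rw [hev z, hL]
  rw [show (f.roots.map (fun a => 1 - z / a)) = (f.roots.map (fun a => (z - a) / ((0:ℂ) - a))) from
    Multiset.map_congr rfl (fun a ha => by
      have h := hroots a ha
      rw [zero_sub, div_neg, sub_div, div_self h, neg_sub])]
  rw [Multiset.prod_map_div, one_div_mul_eq_div]

private lemma factor_bound {p : ℕ} (hp : 2 ≤ p) (w : ℂ) :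
    ‖1 - w‖ ≤
      Real.exp (-(∑ k ∈ Finset.Icc 1 (p - 1), (1 / (k : ℂ)) * w ^ k).re
        + ((p : ℝ) * 2 ^ p) * ‖w‖ ^ p) := by
  set r : ℝ := ‖w‖ with hr
  have hr0 : 0 ≤ r := norm_nonneg w
  set S : ℂ := ∑ k ∈ Finset.Icc 1 (p - 1), (1 / (k : ℂ)) * w ^ k with hS
  set c : ℝ := (p : ℝ) * 2 ^ p with hc
  have hc2 : (2 : ℝ) ≤ c := by
    have h1 : (2:ℝ) ≤ (p:ℝ) := by exact_mod_cast hp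
    have h2 : (1:ℝ) ≤ 2 ^ p := one_le_pow₀ (by norm_num)
    nlinarith
  have hrp0 : 0 ≤ r ^ p := by positivity
  have hIcc : Finset.Icc 1 (p - 1) = Finset.Ico 1 p := by
    rw [← Finset.Ico_add_one_right_eq_Icc]
    congr 1
    omega
  have hI : ∑ n ∈ Finset.range p, w ^ n / (n : ℂ) = S := by
    rw [Finset.range_eq_Ico, Finset.sum_eq_sum_Ico_succ_bot (by omega : 0 < p)]
    rw [hS, hIcc]
    simp only [Nat.cast_zero, pow_zero, div_zero, zero_add]
    exact Finset.sum_congr rfl (fun k _ => by rw [one_div, mul_comm, div_eq_mul_inv])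
  rcases lt_or_ge r (1/2) with hsmall | hlarge
  · -- small case
    have hw1 : r < 1 := by linarith
    have hne : (1 : ℂ) - w ≠ 0 := by
      intro h
      have hgg : w = 1 := by linear_combination -h
      rw [hgg] at hr
      simp at hr
      rw [hr] at hsmall
      norm_num at hsmall
    have habs : ‖1 - w‖ = Real.exp ((Complex.log (1 - w)).re) := by
      rw [← Complex.norm_exp, Complex.exp_log hne]
    rw [habs, Real.exp_le_exp]
    have hsum : HasSum (fun n : ℕ => w ^ n / (n : ℂ)) (-Complex.log (1 - w)) :=
      Complex.hasSum_taylorSeries_neg_log (by exact hw1)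
    have htail : HasSum (fun n : ℕ => w ^ (n + p) / ((n + p : ℕ) : ℂ))
        (-Complex.log (1 - w) - ∑ i ∈ Finset.range p, w ^ i / (i : ℂ)) :=
      (hasSum_nat_add_iff' p).mpr hsum
    rw [hI] at htail
    set T : ℂ := -Complex.log (1 - w) - S with hT
    have hgb : ∀ n : ℕ, ‖w ^ (n + p) / ((n + p : ℕ) : ℂ)‖ ≤ r ^ p * r ^ n := by
      intro n
      rw [norm_div, norm_pow, ← hr]
      rcases Nat.eq_zero_or_pos (n + p) with h | h
      · omega
      · have h1 : (1 : ℝ) ≤ ‖((n + p : ℕ) : ℂ)‖ := by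
          rw [Complex.norm_natCast]
          exact_mod_cast h
        have h2 : (0:ℝ) < ‖((n + p : ℕ) : ℂ)‖ := by linarith
        calc r ^ (n + p) / ‖((n + p : ℕ) : ℂ)‖ ≤ r ^ (n + p) / 1 := by
              apply div_le_div_of_nonneg_left (by positivity) (by norm_num) h1
          _ = r ^ p * r ^ n := by rw [div_one, pow_add, mul_comm]
    have hgeo : Summable (fun n : ℕ => r ^ p * r ^ n) :=
      (summable_geometric_of_lt_one hr0 hw1).mul_left _
    have hsummable : Summable (fun n : ℕ => ‖w ^ (n + p) / ((n + p : ℕ) : ℂ)‖) :=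
      Summable.of_nonneg_of_le (fun n => norm_nonneg _) hgb hgeo
    have hTb : ‖T‖ ≤ 2 * r ^ p := by
      have h1 : ‖T‖ ≤ ∑' n : ℕ, ‖w ^ (n + p) / ((n + p : ℕ) : ℂ)‖ := by
        rw [← htail.tsum_eq]
        exact norm_tsum_le_tsum_norm hsummable
      have h2 : ∑' n : ℕ, ‖w ^ (n + p) / ((n + p : ℕ) : ℂ)‖ ≤ ∑' n : ℕ, r ^ p * r ^ n :=
        Summable.tsum_le_tsum hgb hsummable hgeo
      have h3 : ∑' n : ℕ, r ^ p * r ^ n = r ^ p * (1 - r)⁻¹ := by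
        rw [tsum_mul_left, tsum_geometric_of_lt_one hr0 hw1]
      have h4 : (1 - r)⁻¹ ≤ 2 := by
        rw [show (2:ℝ) = (2⁻¹)⁻¹ by norm_num]
        exact inv_anti₀ (by norm_num) (by linarith)
      calc ‖T‖ ≤ r ^ p * (1 - r)⁻¹ := by rw [← h3]; exact h1.trans h2
        _ ≤ r ^ p * 2 := mul_le_mul_of_nonneg_left h4 hrp0
        _ = 2 * r ^ p := mul_comm _ _
    have hlog : Complex.log (1 - w) = -T - S := by rw [hT]; ring
    rw [hlog]
    have h5 : -T.re ≤ ‖T‖ := (neg_le_abs _).trans (Complex.abs_re_le_norm T)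
    have h8 : 2 * r ^ p ≤ c * r ^ p := mul_le_mul_of_nonneg_right hc2 hrp0
    simp only [Complex.sub_re, Complex.neg_re]
    linarith
  · -- large case
    have h1 : ‖1 - w‖ ≤ 1 + r := by
      have := norm_sub_le (1 : ℂ) w
      simpa using this
    have h2 : 1 + r ≤ Real.exp r := by
      have := Real.add_one_le_exp r
      linarith
    refine (h1.trans h2).trans (Real.exp_le_exp.mpr ?_)
    have hpow : ∀ k, 1 ≤ k → k ≤ p → r ^ k ≤ 2 ^ p * r ^ p := by
      intro k hk1 hkp
      have h2r : (1:ℝ) ≤ 2 * r := by linarith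
      calc r ^ k = r ^ k * 1 := (mul_one _).symm
        _ ≤ r ^ k * (2 * r) ^ (p - k) :=
            mul_le_mul_of_nonneg_left (one_le_pow₀ h2r) (by positivity)
        _ = 2 ^ (p - k) * (r ^ k * r ^ (p - k)) := by rw [mul_pow]; ring
        _ = 2 ^ (p - k) * r ^ p := by rw [← pow_add, Nat.add_sub_cancel' hkp]
        _ ≤ 2 ^ p * r ^ p := mul_le_mul_of_nonneg_right
            (pow_le_pow_right₀ (by norm_num) (Nat.sub_le p k)) hrp0
    have hSre : S.re ≤ ∑ k ∈ Finset.Icc 1 (p - 1), r ^ k := by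
      calc S.re ≤ ‖S‖ := Complex.re_le_norm S
        _ ≤ ∑ k ∈ Finset.Icc 1 (p - 1), ‖(1 / (k : ℂ)) * w ^ k‖ :=
            norm_sum_le _ _
        _ ≤ ∑ k ∈ Finset.Icc 1 (p - 1), r ^ k := by
            refine Finset.sum_le_sum (fun k hk => ?_)
            have hk1 : 1 ≤ k := (Finset.mem_Icc.mp hk).1
            rw [norm_mul, norm_pow, norm_div, norm_one, Complex.norm_natCast, ← hr]
            have : 1 / (k:ℝ) ≤ 1 := by
              rw [div_le_one (by exact_mod_cast hk1)]
              exact_mod_cast hk1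
            calc 1 / (k:ℝ) * r ^ k ≤ 1 * r ^ k :=
                  mul_le_mul_of_nonneg_right this (by positivity)
              _ = r ^ k := one_mul _
    have hsum2 : ∑ k ∈ Finset.Icc 1 (p - 1), r ^ k
        ≤ ((p : ℝ) - 1) * (2 ^ p * r ^ p) := by
      calc ∑ k ∈ Finset.Icc 1 (p - 1), r ^ k
          ≤ ∑ _k ∈ Finset.Icc 1 (p - 1), 2 ^ p * r ^ p :=
            Finset.sum_le_sum (fun k hk => hpow k (Finset.mem_Icc.mp hk).1
              (le_trans (Finset.mem_Icc.mp hk).2 (by omega)))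
        _ = ((p : ℝ) - 1) * (2 ^ p * r ^ p) := by
            rw [Finset.sum_const, Nat.card_Icc, nsmul_eq_mul]
            congr 1
            have : p - 1 + 1 - 1 = p - 1 := by omega
            rw [this, Nat.cast_sub (by omega)]
            norm_num
    have hr1 : r ≤ 2 ^ p * r ^ p := by
      have := hpow 1 le_rfl (by omega)
      rwa [pow_one] at this
    have hceq : c * r ^ p = (p : ℝ) * (2 ^ p * r ^ p) := by rw [hc]; ring
    linarith

private lemma neg_add_multiset (s : Multiset ℂ) (F : ℂ → ℝ) (G : ℂ → ℝ) :
    -(s.map F).sum + (s.map G).sum = (s.map (fun a => -F a + G a)).sum := by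
  induction s using Multiset.induction_on with
  | empty => simp
  | cons a s ih => simp only [Multiset.map_cons, Multiset.sum_cons, ← ih]; ring

end Aux4

/-- Corollary to Proposition 2.2: bounds for a polynomial with `f(0) = 1` in terms of
the power sums of its inverse roots. -/
theorem statement4 :
    (∀ f : Polynomial ℂ, f.eval 0 = 1 → ∀ z : ℂ,
      ‖f.eval z‖ ≤ Real.exp (sAbs 1 f * ‖z‖)) ∧
    ∀ p : ℕ, 2 ≤ p → ∃ c : ℝ, 0 < c ∧
      ∀ f : Polynomial ℂ, f.eval 0 = 1 → ∀ z : ℂ,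
        ‖f.eval z‖ ≤
          Real.exp (-(∑ k ∈ Finset.Icc 1 (p - 1), (1 / (k : ℂ)) * sPow k f * z ^ k).re +
            c * sAbs p f * ‖z‖ ^ p) := by
  constructor
  · intro f hf z
    obtain ⟨hroots, hprod⟩ := eval_eq_prod' hf
    rw [hprod z]
    have hsum : sAbs 1 f * ‖z‖
        = (f.roots.map (fun a => (‖a‖)⁻¹ ^ 1 * ‖z‖)).sum := by
      simp only [sAbs]
      rw [← Multiset.sum_map_mul_right]
    rw [hsum]
    refine abs_prod_le_exp_sum _ _ _ (fun a ha => ?_)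
    have h1 : ‖1 - z / a‖ ≤ 1 + ‖z / a‖ := by
      have := norm_sub_le (1:ℂ) (z/a)
      simpa using this
    have h2 : 1 + ‖z / a‖ ≤ Real.exp (‖z / a‖) := by
      have := Real.add_one_le_exp (‖z/a‖); linarith
    have h3 : ‖z / a‖ = (‖a‖)⁻¹ ^ 1 * ‖z‖ := by
      rw [norm_div, pow_one, div_eq_mul_inv, mul_comm]
    rw [← h3]
    exact h1.trans h2
  · intro p hp
    refine ⟨(p:ℝ) * 2 ^ p, by positivity, fun f hf z => ?_⟩
    obtain ⟨hroots, hprod⟩ := eval_eq_prod' hf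
    rw [hprod z]
    have hA : (∑ k ∈ Finset.Icc 1 (p-1), (1/(k:ℂ)) * sPow k f * z^k)
        = (f.roots.map (fun a => ∑ k ∈ Finset.Icc 1 (p-1), (1/(k:ℂ)) * (z/a)^k)).sum := by
      rw [multiset_sum_swap]
      refine Finset.sum_congr rfl (fun k _ => ?_)
      simp only [sPow]
      rw [← Multiset.sum_map_mul_left, ← Multiset.sum_map_mul_right]
      congr 1
      exact Multiset.map_congr rfl (fun a _ => by rw [div_pow]; ring)
    have hre : (∑ k ∈ Finset.Icc 1 (p-1), (1/(k:ℂ)) * sPow k f * z^k).re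
        = (f.roots.map (fun a => (∑ k ∈ Finset.Icc 1 (p-1), (1/(k:ℂ)) * (z/a)^k).re)).sum := by
      rw [hA, re_multiset_sum]
    have hB : ((p:ℝ) * 2^p) * sAbs p f * ‖z‖ ^ p
        = (f.roots.map (fun a => ((p:ℝ) * 2^p) * ‖z/a‖ ^ p)).sum := by
      simp only [sAbs]
      rw [← Multiset.sum_map_mul_left, ← Multiset.sum_map_mul_right]
      congr 1
      exact Multiset.map_congr rfl (fun a _ => by rw [norm_div, div_pow]; ring)
    have hkey : -(∑ k ∈ Finset.Icc 1 (p-1), (1/(k:ℂ)) * sPow k f * z^k).re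
          + ((p:ℝ) * 2^p) * sAbs p f * ‖z‖ ^ p
        = (f.roots.map (fun a => -(∑ k ∈ Finset.Icc 1 (p-1), (1/(k:ℂ)) * (z/a)^k).re
            + ((p:ℝ) * 2^p) * ‖z/a‖ ^ p)).sum := by
      rw [hre, hB, neg_add_multiset]
    rw [hkey]
    exact abs_prod_le_exp_sum _ _ _ (fun a ha => factor_bound hp (z/a))
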